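/- arXiv:2006.02599 — 3 statements merged into one kernel-verified Lean document; each statement's English description precedes it below -/
import Mathlib

section
/- Let n ≥ 2, let G be a simple graph on the vertex set [n] with G ∈ C_cyclic, let γ ≥ 0, and suppose every 2-matching of G has more than γ connected components. Then κ(G) ≤ n + 11n/ln n − γ. -/
/-- Number of edges of `G` with both endpoints in `S`. -/
def edgesWithin {n : ℕ} (G : SimpleGraph (Fin n)) [DecidableRel G.Adj] (S : Finset (Fin n)) : ℕ :=
  (G.edgeFinset.filter (fun e => ∀ v, v ∈ e → v ∈ S)).card

/-- `H` is a 2-matching of `G`: a spanning subgraph of maximum degree at most 2. -/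
def IsTwoMatching {n : ℕ} (G H : SimpleGraph (Fin n)) : Prop :=
  H ≤ G ∧ ∀ v, ({u | H.Adj v u} : Set (Fin n)).ncard ≤ 2

/-- `κ(G)`: the number of edges in a maximum 2-matching of `G`. -/
noncomputable def kappa {n : ℕ} (G : SimpleGraph (Fin n)) : ℕ :=
  sSup {m : ℕ | ∃ H : SimpleGraph (Fin n), IsTwoMatching G H ∧ H.edgeSet.ncard = m}

/-- The family `C_cyclic`: at most `n / ln n` subsets `S` with `|S| ≤ ln n / 10` inducing a
connected subgraph with at least `|S|` edges. -/
def CCyclic {n : ℕ} (G : SimpleGraph (Fin n)) [DecidableRel G.Adj] : Prop :=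
  (({S : Finset (Fin n) | (S.card : ℝ) ≤ Real.log n / 10 ∧
      (G.induce (S : Set (Fin n))).Connected ∧ S.card ≤ edgesWithin G S} :
        Set (Finset (Fin n))).ncard : ℝ) ≤ (n : ℝ) / Real.log n

open SimpleGraph Finset

lemma induce_supp_connected' {V : Type*} (H : SimpleGraph V) (c : H.ConnectedComponent) :
  (H.induce c.supp).Connected := by
  classical
  haveI : Nonempty c.supp := ⟨⟨c.out, c.out_eq⟩⟩
  refine ⟨fun x y => ?_⟩
  obtain ⟨u, hu⟩ := x; obtain ⟨v, hv⟩ := y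
  rw [ConnectedComponent.mem_supp_iff] at hu hv
  obtain ⟨p⟩ : H.Reachable u v := ConnectedComponent.exact (hu.trans hv.symm)
  have hsupp : Set.MapsTo id {x | x ∈ p.support} c.supp := by
    intro w hw
    have : H.Reachable u w := ⟨p.takeUntil w hw⟩
    show w ∈ c.supp
    rw [ConnectedComponent.mem_supp_iff, ← hu]
    exact ConnectedComponent.sound this.symm
  have r1 : (H.induce {x | x ∈ p.support}).Reachable
      ⟨u, p.start_mem_support⟩ ⟨v, p.end_mem_support⟩ :=
    (p.connected_induce_support).preconnected _ _
  have r2 := r1.map (induceHom (Hom.id) hsupp)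
  convert r2 using 2 <;> exact rfl

lemma key {n : ℕ} (hn : 2 ≤ n) (G : SimpleGraph (Fin n)) [DecidableRel G.Adj]
    (hG : CCyclic G) (H : SimpleGraph (Fin n)) (hH : IsTwoMatching G H) :
    (H.edgeSet.ncard : ℝ) + Nat.card H.ConnectedComponent ≤ n + 11 * n / Real.log n := by
  classical
  haveI : Fintype H.ConnectedComponent := Fintype.ofFinite _
  haveI : Fintype H.edgeSet := Fintype.ofFinite _
  have hlog : 0 < Real.log n := Real.log_pos (by exact_mod_cast hn)
  -- vertex sets of components
  set T : H.ConnectedComponent → Finset (Fin n) := fun c => c.supp.toFinset with hT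
  have hmemT : ∀ v : Fin n, v ∈ T (H.connectedComponentMk v) := by
    intro v; simp [hT, ConnectedComponent.mem_supp_iff]
  have hTdisj : ∀ c c' : H.ConnectedComponent, c ≠ c' → Disjoint (T c) (T c') := by
    intro c c' hcc
    exact Set.disjoint_toFinset.mpr (pairwise_disjoint_supp_connectedComponent H hcc)
  have hTne : ∀ c, (T c).Nonempty := by
    intro c
    refine ⟨c.out, ?_⟩
    simp only [hT, Set.mem_toFinset]
    exact c.out_eq
  have hTsum : ∑ c, (T c).card = n := by
    have hb : (univ : Finset H.ConnectedComponent).biUnion T = univ := by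
      apply Finset.eq_univ_of_forall
      intro v
      exact Finset.mem_biUnion.mpr ⟨_, mem_univ _, hmemT v⟩
    calc ∑ c, (T c).card = ((univ : Finset H.ConnectedComponent).biUnion T).card :=
          (Finset.card_biUnion (fun c _ c' _ h => hTdisj c c' h)).symm
      _ = n := by rw [hb, Finset.card_univ, Fintype.card_fin]
  -- edge sets of components
  set E : H.ConnectedComponent → Finset (Sym2 (Fin n)) :=
    fun c => H.edgeFinset.filter (fun e => ∀ v ∈ e, v ∈ T c) with hE
  have hEdisj : ∀ c c' : H.ConnectedComponent, c ≠ c' → Disjoint (E c) (E c') := by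
    intro c c' hcc
    rw [Finset.disjoint_left]
    intro e he he'
    simp only [hE, Finset.mem_filter] at he he'
    induction e with
    | _ a b =>
      have ha := he.2 a (by simp)
      have ha' := he'.2 a (by simp)
      exact Finset.disjoint_left.mp (hTdisj c c' hcc) ha ha'
  have hEsum : ∑ c, (E c).card = H.edgeFinset.card := by
    have hb : (univ : Finset H.ConnectedComponent).biUnion E = H.edgeFinset := by
      apply Finset.Subset.antisymm
      · intro e he
        obtain ⟨c, _, hc⟩ := Finset.mem_biUnion.mp he
        exact (Finset.mem_filter.mp hc).1
      · intro e he
        induction e with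
        | _ a b =>
          have hadj : H.Adj a b := (SimpleGraph.mem_edgeFinset.mp he)
          refine Finset.mem_biUnion.mpr ⟨H.connectedComponentMk a, mem_univ _, ?_⟩
          simp only [hE, Finset.mem_filter]
          refine ⟨he, ?_⟩
          intro v hv
          rcases Sym2.mem_iff.mp hv with rfl | rfl
          · exact hmemT v
          · have : H.connectedComponentMk v = H.connectedComponentMk a :=
              ConnectedComponent.sound hadj.symm.reachable
            rw [← this]; exact hmemT v
    calc ∑ c, (E c).card = ((univ : Finset H.ConnectedComponent).biUnion E).card :=
          (Finset.card_biUnion (fun c _ c' _ h => hEdisj c c' h)).symm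
      _ = H.edgeFinset.card := by rw [hb]
  -- degree bound
  have hdeg : ∀ v, H.degree v ≤ 2 := by
    intro v
    have := hH.2 v
    have h2 : H.degree v = ({u | H.Adj v u} : Set (Fin n)).ncard := by
      rw [← SimpleGraph.card_neighborSet_eq_degree, Set.ncard_eq_toFinset_card',
        Set.toFinset_card]
      rfl
    omega
  -- edges within a component at most vertices
  have hEcard : ∀ c, (E c).card ≤ (T c).card := by
    intro c
    have := Finset.card_mul_le_card_mul (fun (e : Sym2 (Fin n)) (v : Fin n) => v ∈ e)
      (s := E c) (t := T c) (m := 2) (n := 2) ?_ ?_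
    · omega
    · intro e he
      simp only [hE, Finset.mem_filter] at he
      induction e with
      | _ a b =>
        have hab : a ≠ b := (SimpleGraph.mem_edgeFinset.mp he.1).ne
        have : ({a, b} : Finset (Fin n)) ⊆ (T c).bipartiteAbove (fun e v => v ∈ e) s(a, b) := by
          intro x hx
          rw [Finset.mem_bipartiteAbove]
          rcases Finset.mem_insert.mp hx with rfl | hx
          · exact ⟨he.2 x (by simp), by simp⟩
          · rw [Finset.mem_singleton] at hx; subst hx
            exact ⟨he.2 x (by simp), by simp⟩
        calc 2 = ({a, b} : Finset (Fin n)).card := (Finset.card_pair hab).symm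
          _ ≤ _ := Finset.card_le_card this
    · intro v hv
      have : (E c).bipartiteBelow (fun e v => v ∈ e) v ⊆ H.incidenceFinset v := by
        intro e he
        rw [Finset.mem_bipartiteBelow] at he
        rw [SimpleGraph.mem_incidenceFinset]
        exact ⟨SimpleGraph.mem_edgeFinset.mp (Finset.mem_filter.mp he.1).1, he.2⟩
      calc ((E c).bipartiteBelow (fun e v => v ∈ e) v).card ≤ (H.incidenceFinset v).card :=
            Finset.card_le_card this
        _ = H.degree v := H.card_incidenceFinset_eq_degree v
        _ ≤ 2 := hdeg v
  -- cyclic components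
  set cyc : Finset H.ConnectedComponent :=
    univ.filter (fun c => (T c).card ≤ (E c).card) with hcyc
  have hcount : H.edgeFinset.card + Fintype.card H.ConnectedComponent ≤ n + cyc.card := by
    have h1 : ∀ c : H.ConnectedComponent,
        (E c).card + 1 ≤ (T c).card + (if (T c).card ≤ (E c).card then 1 else 0) := by
      intro c; have := hEcard c; split <;> omega
    calc H.edgeFinset.card + Fintype.card H.ConnectedComponent
        = ∑ c, ((E c).card + 1) := by
          rw [Finset.sum_add_distrib, hEsum, Finset.sum_const, Finset.card_univ, smul_eq_mul,
            mul_one]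
      _ ≤ ∑ c, ((T c).card + if (T c).card ≤ (E c).card then 1 else 0) :=
          Finset.sum_le_sum (fun c _ => h1 c)
      _ = n + cyc.card := by
          rw [Finset.sum_add_distrib, hTsum, hcyc, Finset.card_filter]
  -- connectedness in G of component supports
  have hGconn : ∀ c : H.ConnectedComponent, (G.induce ((T c : Set (Fin n)))).Connected := by
    intro c
    have h1 : ((T c : Set (Fin n))) = c.supp := Set.coe_toFinset _
    rw [h1]
    exact (induce_supp_connected' H c).mono (fun a b hab => hH.1 hab)
  -- cyclic components have enough edges in G
  have hedges : ∀ c ∈ cyc, (T c).card ≤ edgesWithin G (T c) := by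
    intro c hc
    rw [hcyc, Finset.mem_filter] at hc
    refine hc.2.trans (Finset.card_le_card ?_)
    intro e he
    simp only [hE, Finset.mem_filter] at he ⊢
    exact ⟨SimpleGraph.edgeFinset_mono hH.1 he.1, he.2⟩
  -- split cyclic components into small and large
  set L := Real.log n / 10 with hL
  set small := cyc.filter (fun c => ((T c).card : ℝ) ≤ L) with hsm
  set large := cyc.filter (fun c => ¬ ((T c).card : ℝ) ≤ L) with hlg
  have hcycsplit : cyc.card = small.card + large.card :=
    (Finset.card_filter_add_card_filter_not _).symm
  have hTinj : ∀ c c' : H.ConnectedComponent, T c = T c' → c = c' := by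
    intro c c' h
    by_contra hcc
    obtain ⟨x, hx⟩ := hTne c
    exact Finset.disjoint_left.mp (hTdisj c c' hcc) hx (h ▸ hx)
  have hsmall : (small.card : ℝ) ≤ (n : ℝ) / Real.log n := by
    have himg : ((small.image T : Finset (Finset (Fin n))) : Set (Finset (Fin n))) ⊆
        {S : Finset (Fin n) | (S.card : ℝ) ≤ Real.log n / 10 ∧
          (G.induce (S : Set (Fin n))).Connected ∧ S.card ≤ edgesWithin G S} := by
      intro S hS
      simp only [Finset.coe_image, Set.mem_image, Finset.mem_coe] at hS
      obtain ⟨c, hc, rfl⟩ := hS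
      rw [hsm, Finset.mem_filter] at hc
      exact ⟨hc.2, hGconn c, hedges c hc.1⟩
    have h2 : small.card = (small.image T).card :=
      (Finset.card_image_of_injOn (fun c _ c' _ h => hTinj c c' h)).symm
    have h3 : ((small.image T).card : ℝ) ≤ (n : ℝ) / Real.log n := by
      refine le_trans ?_ hG
      rw [← Set.ncard_coe_finset]
      exact_mod_cast Nat.cast_le.mpr (Set.ncard_le_ncard himg (Set.toFinite _))
    rw [h2]; exact h3
  have hlarge : (large.card : ℝ) ≤ 10 * n / Real.log n := by
    have h2 : (large.card : ℝ) * L ≤ ∑ c ∈ large, ((T c).card : ℝ) := by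
      calc (large.card : ℝ) * L = ∑ _c ∈ large, L := by rw [Finset.sum_const, nsmul_eq_mul]
        _ ≤ _ := Finset.sum_le_sum (fun c hc => by
            rw [hlg, Finset.mem_filter] at hc
            exact (not_le.mp hc.2).le)
    have h3 : ∑ c ∈ large, ((T c).card : ℝ) ≤ n := by
      have h4 : ∑ c ∈ large, (T c).card ≤ ∑ c, (T c).card :=
        Finset.sum_le_sum_of_subset (Finset.subset_univ _)
      rw [hTsum] at h4
      push_cast
      exact_mod_cast h4
    rw [hL] at h2
    rw [le_div_iff₀ hlog]
    linarith
  -- put everything together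
  have hfin : (H.edgeSet.ncard : ℝ) = H.edgeFinset.card := by
    rw [Set.ncard_eq_toFinset_card']
    congr 2
  have hcc : (Nat.card H.ConnectedComponent : ℝ) = Fintype.card H.ConnectedComponent := by
    rw [Nat.card_eq_fintype_card]
  have heq : 11 * (n : ℝ) / Real.log n = (n : ℝ) / Real.log n + 10 * n / Real.log n := by
    ring
  have hcount' : (H.edgeFinset.card : ℝ) + Fintype.card H.ConnectedComponent ≤
      n + cyc.card := by exact_mod_cast hcount
  have hsplit' : (cyc.card : ℝ) = small.card + large.card := by exact_mod_cast hcycsplit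
  rw [hfin, hcc, heq]
  linarith

theorem stmt_3 {n : ℕ} (hn : 2 ≤ n) (G : SimpleGraph (Fin n)) [DecidableRel G.Adj]
    (hG : CCyclic G) (γ : ℝ) (hγ : 0 ≤ γ)
    (hmatch : ∀ H : SimpleGraph (Fin n), IsTwoMatching G H →
      γ < Nat.card H.ConnectedComponent) :
    (kappa G : ℝ) ≤ n + 11 * n / Real.log n - γ := by
  classical
  have hne : {m : ℕ | ∃ H : SimpleGraph (Fin n), IsTwoMatching G H ∧ H.edgeSet.ncard = m}.Nonempty := by
    refine ⟨0, ⊥, ⟨bot_le, fun v => ?_⟩, ?_⟩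
    · simp only [SimpleGraph.bot_adj]
      simp [Set.ncard_empty]
    · simp [SimpleGraph.edgeSet_bot]
  have hbdd : BddAbove {m : ℕ | ∃ H : SimpleGraph (Fin n), IsTwoMatching G H ∧ H.edgeSet.ncard = m} := by
    refine ⟨Nat.card (Sym2 (Fin n)), ?_⟩
    rintro m ⟨H, _, rfl⟩
    rw [← Set.ncard_univ]
    exact Set.ncard_le_ncard (Set.subset_univ _) Set.finite_univ
  obtain ⟨H, hH, hHk⟩ := Nat.sSup_mem hne hbdd
  have h1 := key hn G hG H hH
  have h2 := hmatch H hH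
  rw [kappa, hHk] at *
  linarith
end

section
/- For every real number α > 2 there exists a unique λ > 0 such that λ(1 − e^{−λ})/(1 − e^{−λ} − λe^{−λ}) = α. Moreover, the function f(λ) = λ(1 − e^{−λ})/(1 − e^{−λ} − λe^{−λ}) is strictly increasing on (0, ∞). -/
open Real

private lemma key_ineq {x : ℝ} (hx : 0 < x) : x * exp (x/2) < exp x - 1 := by
  have h : x/2 < Real.sinh (x/2) := Real.self_lt_sinh_iff.2 (by linarith)
  rw [Real.sinh_eq] at h
  have he : (0:ℝ) < exp (x/2) := exp_pos _
  have h2 : x < exp (x/2) - exp (-(x/2)) := by linarith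
  have h3 := mul_lt_mul_of_pos_right h2 he
  calc x * exp (x/2) < (exp (x/2) - exp (-(x/2))) * exp (x/2) := h3
    _ = exp x - 1 := by
        rw [sub_mul, ← exp_add, ← exp_add, add_halves, neg_add_cancel, exp_zero]

private lemma denom_pos {x : ℝ} (hx : 0 < x) : 0 < exp x - 1 - x := by
  have := Real.add_one_lt_exp (ne_of_gt hx)
  linarith

private lemma denom_lb {x : ℝ} (hx : 0 < x) : x^2/2 < exp x - 1 - x := by
  have h1 := key_ineq hx
  have h2 : 1 + x/2 < exp (x/2) := by
    have := Real.add_one_lt_exp (show x/2 ≠ 0 by positivity)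
    linarith
  nlinarith

private lemma D_pos {x : ℝ} (hx : 0 < x) : 0 < 1 - exp (-x) - x * exp (-x) := by
  have e1 : exp (-x) * exp x = 1 := by rw [← exp_add]; simp
  have h := mul_pos (exp_pos (-x)) (denom_pos hx)
  nlinarith

noncomputable def hfun (x : ℝ) : ℝ := x⁻¹ - (exp x - 1)⁻¹

private lemma hfun_pos {x : ℝ} (hx : 0 < x) : 0 < hfun x := by
  have h1 : 0 < exp x - 1 := by have := denom_pos hx; linarith
  have h2 : x < exp x - 1 := by have := denom_pos hx; linarith
  have := one_div_lt_one_div_of_lt hx h2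
  simp only [one_div] at this
  unfold hfun; linarith

private lemma f_eq {x : ℝ} (hx : 0 < x) :
    x * (1 - exp (-x)) / (1 - exp (-x) - x * exp (-x)) = (hfun x)⁻¹ := by
  have hxne : x ≠ 0 := ne_of_gt hx
  have h1 : exp x - 1 ≠ 0 := by have := denom_pos hx; intro h; nlinarith
  have h2 : exp x - 1 - x ≠ 0 := ne_of_gt (denom_pos hx)
  have hD : 1 - exp (-x) - x * exp (-x) ≠ 0 := ne_of_gt (D_pos hx)
  have hexp : exp x ≠ 0 := (exp_pos x).ne'
  have hh : hfun x ≠ 0 := ne_of_gt (hfun_pos hx)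
  rw [exp_neg] at hD ⊢
  unfold hfun at hh ⊢
  field_simp

private lemma hfun_hasDeriv {x : ℝ} (hx : 0 < x) :
    HasDerivAt hfun (-(x^2)⁻¹ - (-exp x / (exp x - 1)^2)) x := by
  have h1 : exp x - 1 ≠ 0 := ne_of_gt (by have := denom_pos hx; linarith)
  have d1 : HasDerivAt (fun y : ℝ => y⁻¹) (-(x^2)⁻¹) x := hasDerivAt_inv (ne_of_gt hx)
  have d2 : HasDerivAt (fun y => (exp y - 1)⁻¹) (-exp x / (exp x - 1)^2) x :=
    ((Real.hasDerivAt_exp x).sub_const 1).inv h1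
  exact d1.sub d2

private lemma hfun_anti : StrictAntiOn hfun (Set.Ioi 0) := by
  apply strictAntiOn_of_deriv_neg (convex_Ioi 0)
  · intro x hx
    exact (hfun_hasDeriv hx).continuousAt.continuousWithinAt
  · intro x hx
    rw [interior_Ioi] at hx
    have hx' : (0:ℝ) < x := hx
    rw [(hfun_hasDeriv hx').deriv]
    have h1 : 0 < exp x - 1 := by have := denom_pos hx'; linarith
    have key : x * exp (x/2) < exp x - 1 := key_ineq hx'
    have e2 : exp (x/2) * exp (x/2) = exp x := by rw [← exp_add, add_halves]
    have hsq : exp x * x^2 < (exp x - 1)^2 := by nlinarith [exp_pos (x/2), mul_pos hx (exp_pos (x/2))]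
    have h2 : (0:ℝ) < (exp x - 1)^2 := by positivity
    have hx2 : (0:ℝ) < x^2 := by nlinarith
    have h3 : exp x / (exp x - 1)^2 < 1 / x^2 := (div_lt_div_iff₀ h2 hx2).2 (by nlinarith)
    rw [one_div] at h3
    rw [neg_div, sub_neg_eq_add]
    linarith

private lemma f_eq2 {x : ℝ} (hx : 0 < x) :
    x * (1 - exp (-x)) / (1 - exp (-x) - x * exp (-x)) = x + x^2/(exp x - 1 - x) := by
  have hxne : x ≠ 0 := ne_of_gt hx
  have h2 : exp x - 1 - x ≠ 0 := ne_of_gt (denom_pos hx)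
  have hD : 1 - exp (-x) - x * exp (-x) ≠ 0 := ne_of_gt (D_pos hx)
  have hexp : exp x ≠ 0 := (exp_pos x).ne'
  rw [exp_neg] at hD ⊢
  field_simp at hD ⊢
  ring


private lemma f_ub {x : ℝ} (hx : 0 < x) :
    x * (1 - exp (-x)) / (1 - exp (-x) - x * exp (-x)) < x + 2 := by
  rw [f_eq2 hx]
  have hd := denom_pos hx
  have : x^2 / (exp x - 1 - x) < 2 := (div_lt_iff₀ hd).2 (by nlinarith [denom_lb hx])
  linarith

private lemma f_lb {x : ℝ} (hx : 0 < x) :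
    x < x * (1 - exp (-x)) / (1 - exp (-x) - x * exp (-x)) := by
  rw [f_eq2 hx]
  have hd := denom_pos hx
  have : 0 < x^2 / (exp x - 1 - x) := by positivity
  linarith

theorem stmt_11 :
    (∀ α : ℝ, 2 < α → ∃! lam : ℝ, 0 < lam ∧
        lam * (1 - Real.exp (-lam)) /
          (1 - Real.exp (-lam) - lam * Real.exp (-lam)) = α) ∧
    StrictMonoOn
      (fun lam : ℝ =>
        lam * (1 - Real.exp (-lam)) / (1 - Real.exp (-lam) - lam * Real.exp (-lam)))
      (Set.Ioi 0) := by
  have hmono : StrictMonoOn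
      (fun lam : ℝ =>
        lam * (1 - Real.exp (-lam)) / (1 - Real.exp (-lam) - lam * Real.exp (-lam)))
      (Set.Ioi 0) := by
    intro a ha b hb hab
    simp only
    rw [f_eq (Set.mem_Ioi.1 ha), f_eq (Set.mem_Ioi.1 hb)]
    exact inv_strictAnti₀ (hfun_pos (Set.mem_Ioi.1 hb)) (hfun_anti ha hb hab)
  refine ⟨?_, hmono⟩
  intro α hα
  set f : ℝ → ℝ := fun lam =>
    lam * (1 - Real.exp (-lam)) / (1 - Real.exp (-lam) - lam * Real.exp (-lam)) with hf
  have h2 : 0 < α - 2 := by linarith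
  set a : ℝ := (α - 2)/2 with hadef
  have ha : 0 < a := by positivity
  have hb : (0:ℝ) < α := by linarith
  have hab : a ≤ α := by rw [hadef]; linarith
  have hcont : ContinuousOn f (Set.Icc a α) := by
    apply ContinuousOn.div
    · fun_prop
    · fun_prop
    · intro x hx
      exact ne_of_gt (D_pos (lt_of_lt_of_le ha hx.1))
  have hfa : f a < α := by
    have := f_ub ha
    simp only [hf]
    rw [hadef] at this ⊢
    linarith
  have hfb : α ≤ f α := le_of_lt (f_lb hb)
  obtain ⟨c, hc, hfc⟩ := intermediate_value_Icc hab hcont ⟨le_of_lt hfa, hfb⟩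
  have hc0 : 0 < c := lt_of_lt_of_le ha hc.1
  refine ⟨c, ⟨hc0, hfc⟩, ?_⟩
  rintro d ⟨hd, hfd⟩
  exact hmono.injOn (Set.mem_Ioi.2 hd) (Set.mem_Ioi.2 hc0) (hfd.trans hfc.symm)
end

section
/- Define ε₁ : [0, 1/2] → ℝ by ε₁(δ) = ln((2^{1+δ} − 1)·ln(2^{1+δ} − 1) − 2^{1+δ}·δ·ln 2 + (1 + ln 2)·2^{δ}) − δ·ln 2 − ln(1 + ln 2). Then ε₁(0) = 0, ε₁ is monotonically increasing on [0, 1/2], and ε₁(δ) > 0 for every δ ∈ (0, 1/2]. -/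
/-- The penalty function `ε₁` for making `δ·n·ln 2` non-greedy moves in the first phase. -/
noncomputable def eps1 (δ : ℝ) : ℝ :=
  Real.log (((2 : ℝ) ^ (1 + δ) - 1) * Real.log ((2 : ℝ) ^ (1 + δ) - 1) -
      (2 : ℝ) ^ (1 + δ) * δ * Real.log 2 + (1 + Real.log 2) * (2 : ℝ) ^ δ) -
    δ * Real.log 2 - Real.log (1 + Real.log 2)

noncomputable def gAux (δ : ℝ) : ℝ :=
  (2 - (2:ℝ)^(-δ)) * Real.log ((2:ℝ)^(1+δ) - 1) - 2*δ*Real.log 2 + (1 + Real.log 2)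

lemma hx_ge (δ : ℝ) (hδ : 0 ≤ δ) : (1:ℝ) ≤ (2:ℝ)^(1+δ) - 1 := by
  have : (2:ℝ)^(1:ℝ) ≤ (2:ℝ)^(1+δ) :=
    Real.rpow_le_rpow_of_exponent_le one_le_two (by linarith)
  rw [Real.rpow_one] at this; linarith

lemma gAux_hasDeriv (δ : ℝ) (hδ : 0 ≤ δ) :
    HasDerivAt gAux (2 * Real.log 2 * Real.log ((2:ℝ)^(1+δ) - 1) / (2:ℝ)^(1+δ)) δ := by
  have hxpos : (0:ℝ) < (2:ℝ)^(1+δ) := Real.rpow_pos_of_pos two_pos _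
  have hx1 : (1:ℝ) ≤ (2:ℝ)^(1+δ) - 1 := hx_ge δ hδ
  have hne : (2:ℝ)^(1+δ) - 1 ≠ 0 := by linarith
  -- derivative of 2^(-δ)
  have h1 : HasDerivAt (fun t : ℝ => (2:ℝ)^(-t)) (-((2:ℝ)^(-δ) * Real.log 2)) δ := by
    have := (Real.hasStrictDerivAt_const_rpow (a := 2) two_pos (-δ)).hasDerivAt.comp δ
      (hasDerivAt_neg δ)
    simpa [mul_comm, Function.comp_def] using this
  -- derivative of 2^(1+δ)
  have h2 : HasDerivAt (fun t : ℝ => (2:ℝ)^(1+t)) ((2:ℝ)^(1+δ) * Real.log 2) δ := by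
    have := (Real.hasStrictDerivAt_const_rpow (a := 2) two_pos (1+δ)).hasDerivAt.comp δ
      ((hasDerivAt_id δ).const_add 1)
    simpa [Function.comp_def] using this
  have h3 : HasDerivAt (fun t : ℝ => Real.log ((2:ℝ)^(1+t) - 1))
      ((2:ℝ)^(1+δ) * Real.log 2 / ((2:ℝ)^(1+δ) - 1)) δ :=
    (h2.sub_const 1).log hne
  have h4 : HasDerivAt (fun t : ℝ => (2 - (2:ℝ)^(-t))) ((2:ℝ)^(-δ) * Real.log 2) δ := by
    simpa using (h1.const_sub 2)
  have h5 := ((h4.mul h3).sub ((hasDerivAt_id δ).const_mul (2*Real.log 2))).add_const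
      (1 + Real.log 2)
  have heq : gAux = fun t : ℝ =>
      (2 - (2:ℝ)^(-t)) * Real.log ((2:ℝ)^(1+t) - 1) - 2*Real.log 2*t + (1 + Real.log 2) := by
    funext t; unfold gAux; ring
  rw [heq]
  refine h5.congr_deriv ?_
  have hinv : (2:ℝ)^(-δ) = 2 / (2:ℝ)^(1+δ) := by
    rw [Real.rpow_neg (by norm_num), eq_div_iff hxpos.ne', Real.rpow_add two_pos,
      Real.rpow_one]
    field_simp
  rw [hinv]
  field_simp
  ring


lemma gAux_strictMono : StrictMonoOn gAux (Set.Icc 0 (1/2)) := by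
  apply strictMonoOn_of_deriv_pos (convex_Icc _ _)
  · exact fun x hx => (gAux_hasDeriv x hx.1).continuousAt.continuousWithinAt
  · intro x hx
    rw [interior_Icc] at hx
    rw [(gAux_hasDeriv x hx.1.le).deriv]
    have h2 : (0:ℝ) < Real.log 2 := Real.log_pos one_lt_two
    have hxp : (0:ℝ) < (2:ℝ)^(1+x) := Real.rpow_pos_of_pos two_pos _
    have hgt : (2:ℝ) < (2:ℝ)^(1+x) := by
      have := Real.rpow_lt_rpow_of_exponent_lt one_lt_two (show (1:ℝ) < 1+x by linarith [hx.1])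
      rwa [Real.rpow_one] at this
    have hlog : (0:ℝ) < Real.log ((2:ℝ)^(1+x) - 1) := Real.log_pos (by linarith)
    positivity

lemma gAux_zero : gAux 0 = 1 + Real.log 2 := by
  unfold gAux
  norm_num

lemma gAux_pos {δ : ℝ} (hδ : δ ∈ Set.Icc (0:ℝ) (1/2)) : 0 < gAux δ := by
  have h0 : (0:ℝ) ∈ Set.Icc (0:ℝ) (1/2) := by constructor <;> norm_num
  have := gAux_strictMono.monotoneOn h0 hδ hδ.1
  rw [gAux_zero] at this
  have h2 : (0:ℝ) < Real.log 2 := Real.log_pos one_lt_two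
  linarith

lemma eps1_eq {δ : ℝ} (hδ : δ ∈ Set.Icc (0:ℝ) (1/2)) :
    eps1 δ = Real.log (gAux δ) - Real.log (1 + Real.log 2) := by
  have hdp : (0:ℝ) < (2:ℝ)^δ := Real.rpow_pos_of_pos two_pos _
  have hF : ((2 : ℝ) ^ (1 + δ) - 1) * Real.log ((2 : ℝ) ^ (1 + δ) - 1) -
      (2 : ℝ) ^ (1 + δ) * δ * Real.log 2 + (1 + Real.log 2) * (2 : ℝ) ^ δ
      = (2:ℝ)^δ * gAux δ := by
    unfold gAux
    have h1 : (2:ℝ)^(1+δ) = 2 * (2:ℝ)^δ := by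
      rw [Real.rpow_add two_pos, Real.rpow_one]
    have h2 : (2:ℝ)^δ * (2:ℝ)^(-δ) = 1 := by
      rw [← Real.rpow_add two_pos]; norm_num
    have h3 : (2:ℝ)^(-δ) = ((2:ℝ)^δ)⁻¹ := Real.rpow_neg (by norm_num) δ
    rw [h1, h3]
    field_simp
  unfold eps1
  rw [hF, Real.log_mul hdp.ne' (gAux_pos hδ).ne', Real.log_rpow two_pos]
  ring

theorem stmt_14 :
    eps1 0 = 0 ∧ MonotoneOn eps1 (Set.Icc 0 (1 / 2)) ∧
      ∀ δ ∈ Set.Ioc (0 : ℝ) (1 / 2), 0 < eps1 δ := by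
  have h0 : (0:ℝ) ∈ Set.Icc (0:ℝ) (1/2) := by constructor <;> norm_num
  have h2 : (0:ℝ) < Real.log 2 := Real.log_pos one_lt_two
  refine ⟨?_, ?_, ?_⟩
  · rw [eps1_eq h0, gAux_zero]; ring
  · intro a ha b hb hab
    rw [eps1_eq ha, eps1_eq hb]
    have := Real.log_le_log (gAux_pos ha) (gAux_strictMono.monotoneOn ha hb hab)
    linarith
  · intro δ hδ
    have hδ' : δ ∈ Set.Icc (0:ℝ) (1/2) := ⟨hδ.1.le, hδ.2⟩
    rw [eps1_eq hδ']
    have hg : gAux 0 < gAux δ := gAux_strictMono h0 hδ' hδ.1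
    rw [gAux_zero] at hg
    have := Real.log_lt_log (by linarith) hg
    linarith
end
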